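/- Let p ∈ (0,1), q = 1 - p, and let k_0, k_1, ..., k_n be non-negative integers with k_0 = 1 and |k_i − k_{i−1}| = 1 for i = 1, ..., n. If k_i > 0 for all i ≤ n, then P(|U_{n+1}^p| = k_n + 1 | |U_i^p| = k_i, i = 0, ..., n) = (p^{k_n} + q^{k_n}) / (p^{k_n − 1} + q^{k_n − 1}). Moreover, for any such admissible history, this conditional probability equals 1 when k_n = 0 and is at least 1/2 when k_n > 0. -/

import Mathlib

set_option linter.unusedSectionVars false
set_option maxHeartbeats 1000000

open MeasureTheory ProbabilityTheory Finset

noncomputable def stepDist (p : ℝ) : Measure ℝ :=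
  ENNReal.ofReal p • Measure.dirac 1 + ENNReal.ofReal (1 - p) • Measure.dirac (-1)

lemma stepDist_one (p : ℝ) : stepDist p {1} = ENNReal.ofReal p := by
  simp [stepDist, Measure.dirac_apply' _ (measurableSet_singleton _), Set.indicator]
  norm_num

lemma stepDist_neg_one (p : ℝ) : stepDist p {-1} = ENNReal.ofReal (1 - p) := by
  simp [stepDist, Measure.dirac_apply' _ (measurableSet_singleton _), Set.indicator]
  norm_num

lemma stepDist_other (p : ℝ) {x : ℝ} (h1 : x ≠ 1) (h2 : x ≠ -1) : stepDist p {x} = 0 := by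
  simp [stepDist, Measure.dirac_apply' _ (measurableSet_singleton _), Set.indicator,
    h1.symm, h2.symm]

namespace BWalk

variable {Ω : Type*} [MeasurableSpace Ω] {μ : Measure Ω}
variable {p : ℝ} {Y : ℕ → Ω → ℝ} {k : ℕ → ℕ}
def hfun (Y : ℕ → Ω → ℝ) (n : ℕ) (ω : Ω) : ℕ → ℝ :=
  fun j => if j ∈ Finset.range (n + 1) then Y j ω else 0

def Aset (Y : ℕ → Ω → ℝ) (k : ℕ → ℕ) (n : ℕ) : Set Ω :=
  {ω | ∀ i, i ≤ n → |∑ j ∈ Finset.range (i + 1), Y j ω| = (k i : ℝ)}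

def AW (Y : ℕ → Ω → ℝ) (k : ℕ → ℕ) (n : ℕ) (r : ℝ) : Set Ω :=
  Aset Y k n ∩ {ω | ∑ j ∈ Finset.range (n + 1), Y j ω = r}

def ANW (Y : ℕ → Ω → ℝ) (k : ℕ → ℕ) (n : ℕ) (r : ℝ) : Set Ω :=
  Aset Y k n ∩ {ω | ∑ j ∈ Finset.range (n + 2), Y j ω = r}
def hist (k : ℕ → ℕ) (n : ℕ) (r : ℝ) : Set (ℕ → ℝ) :=
  {x | (∀ i, i ≤ n → |∑ j ∈ Finset.range (i + 1), x j| = (k i : ℝ)) ∧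
    ∑ j ∈ Finset.range (n + 1), x j = r}

lemma measurableSet_hist (k : ℕ → ℕ) (n : ℕ) (r : ℝ) : MeasurableSet (hist k n r) := by
  have hsum : ∀ m : ℕ, Measurable (fun x : ℕ → ℝ => ∑ j ∈ Finset.range m, x j) :=
    fun m => Finset.measurable_sum _ fun j _ => measurable_pi_apply j
  have h1 : MeasurableSet {x : ℕ → ℝ | ∀ i, i ≤ n →
      |∑ j ∈ Finset.range (i + 1), x j| = (k i : ℝ)} := by
    have : {x : ℕ → ℝ | ∀ i, i ≤ n → |∑ j ∈ Finset.range (i + 1), x j| = (k i : ℝ)}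
        = ⋂ i, ⋂ (_ : i ≤ n),
          (fun x : ℕ → ℝ => |∑ j ∈ Finset.range (i + 1), x j|) ⁻¹' {(k i : ℝ)} := by
      ext x; simp [Set.mem_iInter]
    rw [this]
    exact MeasurableSet.iInter fun i => MeasurableSet.iInter fun _ =>
      ((hsum (i + 1)).abs) (measurableSet_singleton _)
  have h2 : MeasurableSet {x : ℕ → ℝ | ∑ j ∈ Finset.range (n + 1), x j = r} :=
    (hsum (n + 1)) (measurableSet_singleton _)
  exact h1.inter h2

lemma AW_eq_preimage (k : ℕ → ℕ) (n : ℕ) (r : ℝ) :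
    AW Y k n r = hfun Y n ⁻¹' hist k n r := by
  have key : ∀ (ω : Ω) (m : ℕ), m ≤ n + 1 →
      ∑ j ∈ Finset.range m, hfun Y n ω j = ∑ j ∈ Finset.range m, Y j ω := by
    intro ω m hm
    refine Finset.sum_congr rfl fun j hj => ?_
    rw [Finset.mem_range] at hj
    simp [hfun, Finset.mem_range]
    intro h
    omega
  ext ω
  simp only [AW, Aset, hist, Set.mem_inter_iff, Set.mem_setOf_eq, Set.mem_preimage]
  constructor
  · rintro ⟨h1, h2⟩
    exact ⟨fun i hi => by rw [key ω (i+1) (by omega)]; exact h1 i hi,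
      by rw [key ω (n+1) (by omega)]; exact h2⟩
  · rintro ⟨h1, h2⟩
    exact ⟨fun i hi => by rw [← key ω (i+1) (by omega)]; exact h1 i hi,
      by rw [← key ω (n+1) (by omega)]; exact h2⟩

lemma measurable_hfun (hYmeas : ∀ i, Measurable (Y i)) (n : ℕ) :
    Measurable (hfun Y n) := by
  apply measurable_pi_lambda
  intro j
  by_cases h : j ∈ Finset.range (n + 1) <;> simp only [hfun, h, if_true, if_false]
  · exact hYmeas j
  · exact measurable_const

lemma measurableSet_AW (hYmeas : ∀ i, Measurable (Y i)) (k : ℕ → ℕ) (n : ℕ) (r : ℝ) :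
    MeasurableSet (AW Y k n r) := by
  rw [AW_eq_preimage]
  exact measurable_hfun hYmeas n (measurableSet_hist k n r)

lemma Aset_eq_union (k : ℕ → ℕ) (n : ℕ) :
    Aset Y k n = AW Y k n (k n : ℝ) ∪ AW Y k n (-(k n : ℝ)) := by
  ext ω
  simp only [Aset, AW, Set.mem_union, Set.mem_inter_iff, Set.mem_setOf_eq]
  constructor
  · intro h
    have := h n le_rfl
    rcases abs_eq (by positivity : (0:ℝ) ≤ (k n : ℝ)) |>.mp this with h' | h'
    · exact Or.inl ⟨h, h'⟩
    · exact Or.inr ⟨h, h'⟩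
  · rintro (⟨h, _⟩ | ⟨h, _⟩) <;> exact h

lemma measurableSet_Aset (hYmeas : ∀ i, Measurable (Y i)) (k : ℕ → ℕ) (n : ℕ) :
    MeasurableSet (Aset Y k n) := by
  rw [Aset_eq_union]
  exact (measurableSet_AW hYmeas k n _).union (measurableSet_AW hYmeas k n _)

lemma ANW_decomp (k : ℕ → ℕ) (n : ℕ) (r : ℝ) :
    ANW Y k n r = (AW Y k n (k n : ℝ) ∩ Y (n + 1) ⁻¹' {r - (k n : ℝ)}) ∪
      (AW Y k n (-(k n : ℝ)) ∩ Y (n + 1) ⁻¹' {r + (k n : ℝ)}) := by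
  ext ω
  have hsum : ∑ j ∈ Finset.range (n + 2), Y j ω
      = ∑ j ∈ Finset.range (n + 1), Y j ω + Y (n + 1) ω := Finset.sum_range_succ _ _
  simp only [ANW, AW, Set.mem_union, Set.mem_inter_iff, Set.mem_setOf_eq, Set.mem_preimage,
    Set.mem_singleton_iff, hsum]
  constructor
  · rintro ⟨hA, hW⟩
    have := hA n le_rfl
    rcases abs_eq (by positivity : (0:ℝ) ≤ (k n : ℝ)) |>.mp this with h' | h'
    · exact Or.inl ⟨⟨hA, h'⟩, by rw [h'] at hW; linarith⟩
    · exact Or.inr ⟨⟨hA, h'⟩, by rw [h'] at hW; linarith⟩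
  · rintro (⟨⟨hA, hW⟩, hY⟩ | ⟨⟨hA, hW⟩, hY⟩) <;> exact ⟨hA, by rw [hW, hY]; ring⟩

lemma indep_hfun (hYmeas : ∀ i, Measurable (Y i))
    (hYindep : iIndepFun Y μ) (n : ℕ) :
    IndepFun (hfun Y n) (Y (n + 1)) μ := by
  have h := hYindep.indepFun_finset (Finset.range (n + 1)) {n + 1}
    (by simp) hYmeas
  have hφ : Measurable (fun v : (Finset.range (n+1) : Finset ℕ) → ℝ =>
      (fun j => if h : j ∈ Finset.range (n + 1) then v ⟨j, h⟩ else 0) : _ → ℕ → ℝ) := by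
    apply measurable_pi_lambda
    intro j
    by_cases h : j ∈ Finset.range (n + 1) <;> simp only [h, dif_pos, dif_neg, not_false_iff]
    · exact measurable_pi_apply _
    · exact measurable_const
  have hψ : Measurable (fun v : (({n+1} : Finset ℕ) : Finset ℕ) → ℝ =>
      v ⟨n+1, by simp⟩) := measurable_pi_apply _
  exact h.comp hφ hψ

/-- The core splitting identity. -/
lemma split (hYmeas : ∀ i, Measurable (Y i))
    (hYindep : iIndepFun Y μ)
    (hYdist : ∀ i, Measure.map (Y (i + 1)) μ = stepDist p)
    (n : ℕ) {T : Set (ℕ → ℝ)} (hT : MeasurableSet T) (r : ℝ) :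
    μ (hfun Y n ⁻¹' T ∩ Y (n + 1) ⁻¹' {r})
      = μ (hfun Y n ⁻¹' T) * stepDist p {r} := by
  rw [(indep_hfun hYmeas hYindep n).measure_inter_preimage_eq_mul _ _ hT
    (measurableSet_singleton r)]
  congr 1
  rw [← Measure.map_apply (hYmeas (n+1)) (measurableSet_singleton r), hYdist n]


lemma measure_AW_inter (hYmeas : ∀ i, Measurable (Y i))
    (hYindep : iIndepFun Y μ)
    (hYdist : ∀ i, Measure.map (Y (i + 1)) μ = stepDist p)
    (n : ℕ) (r s : ℝ) :
    μ (AW Y k n r ∩ Y (n + 1) ⁻¹' {s}) = μ (AW Y k n r) * stepDist p {s} := by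
  rw [AW_eq_preimage]
  exact split hYmeas hYindep hYdist n (measurableSet_hist k n r) s

lemma disjoint_AW {r r' : ℝ} (h : r ≠ r') : Disjoint (AW Y k n r) (AW Y k n r') := by
  rw [Set.disjoint_left]
  rintro ω ⟨_, h1⟩ ⟨_, h2⟩
  exact h (h1 ▸ h2 ▸ rfl)

lemma measure_ANW_pos (hYmeas : ∀ i, Measurable (Y i))
    (hYindep : iIndepFun Y μ)
    (hYdist : ∀ i, Measure.map (Y (i + 1)) μ = stepDist p)
    (n : ℕ) (hk : 0 < k n) (r : ℝ) :
    μ (ANW Y k n r) = μ (AW Y k n (k n : ℝ)) * stepDist p {r - (k n : ℝ)}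
      + μ (AW Y k n (-(k n : ℝ))) * stepDist p {r + (k n : ℝ)} := by
  rw [ANW_decomp, measure_union, measure_AW_inter hYmeas hYindep hYdist,
    measure_AW_inter hYmeas hYindep hYdist]
  · have hne : (k n : ℝ) ≠ -(k n : ℝ) := by
      have : (0:ℝ) < (k n : ℝ) := by exact_mod_cast hk
      intro h; linarith [h]
    exact Set.disjoint_of_subset (Set.inter_subset_left) (Set.inter_subset_left)
      (disjoint_AW hne)
  · exact (measurableSet_AW hYmeas k n _).inter (hYmeas (n + 1) (measurableSet_singleton _))

lemma ANW_zero (n : ℕ) (hk : k n = 0) (r : ℝ) :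
    ANW Y k n r = AW Y k n 0 ∩ Y (n + 1) ⁻¹' {r} := by
  ext ω
  have hsum : ∑ j ∈ Finset.range (n + 2), Y j ω
      = ∑ j ∈ Finset.range (n + 1), Y j ω + Y (n + 1) ω := Finset.sum_range_succ _ _
  simp only [ANW, AW, Set.mem_inter_iff, Set.mem_setOf_eq, Set.mem_preimage,
    Set.mem_singleton_iff, hsum]
  constructor
  · rintro ⟨hA, hW⟩
    have h0 : ∑ j ∈ Finset.range (n + 1), Y j ω = 0 := by
      have := hA n le_rfl
      rw [hk] at this
      simpa using abs_eq_zero.mp (by simpa using this)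
    exact ⟨⟨hA, h0⟩, by rw [h0] at hW; linarith⟩
  · rintro ⟨⟨hA, h0⟩, hY⟩
    exact ⟨hA, by rw [h0, hY]; ring⟩

lemma measure_ANW_zero (hYmeas : ∀ i, Measurable (Y i))
    (hYindep : iIndepFun Y μ)
    (hYdist : ∀ i, Measure.map (Y (i + 1)) μ = stepDist p)
    (n : ℕ) (hk : k n = 0) (r : ℝ) :
    μ (ANW Y k n r) = μ (AW Y k n 0) * stepDist p {r} := by
  rw [ANW_zero n hk, measure_AW_inter hYmeas hYindep hYdist]

lemma AW_succ (n : ℕ) {r : ℝ} (hr : |r| = (k (n + 1) : ℝ)) :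
    AW Y k (n + 1) r = ANW Y k n r := by
  ext ω
  simp only [AW, ANW, Aset, Set.mem_inter_iff, Set.mem_setOf_eq]
  constructor
  · rintro ⟨hA, hW⟩
    exact ⟨fun i hi => hA i (by omega), hW⟩
  · rintro ⟨hA, hW⟩
    refine ⟨fun i hi => ?_, hW⟩
    rcases Nat.lt_or_ge i (n + 1) with h | h
    · exact hA i (by omega)
    · have : i = n + 1 := by omega
      subst this
      rw [hW, hr]


lemma AW_zero_eq (hk0 : k 0 = 1) : AW Y k 0 (k 0 : ℝ) = Y 0 ⁻¹' {1} ∧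
    AW Y k 0 (-(k 0 : ℝ)) = Y 0 ⁻¹' {-1} := by
  constructor <;>
  · ext ω
    simp only [AW, Aset, Set.mem_inter_iff, Set.mem_setOf_eq, Set.mem_preimage,
      Set.mem_singleton_iff, hk0, Finset.sum_range_one, Nat.cast_one]
    constructor
    · rintro ⟨_, h⟩
      simpa using h
    · intro h
      refine ⟨fun i hi => ?_, by simpa using h⟩
      interval_cases i
      simp [Finset.sum_range_one, hk0, h]

lemma main_induction [IsProbabilityMeasure μ]
    (hp0 : 0 < p) (hp1 : p < 1)
    (hYmeas : ∀ i, Measurable (Y i))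
    (hYindep : iIndepFun Y μ)
    (hY0dist : Measure.map (Y 0) μ = stepDist (1/2))
    (hYdist : ∀ i, Measure.map (Y (i + 1)) μ = stepDist p)
    (hk0 : k 0 = 1) :
    ∀ n : ℕ, (∀ i, 1 ≤ i → i ≤ n → |(k i : ℤ) - (k (i - 1) : ℤ)| = 1) →
    ∃ α β : ℝ, 0 < α ∧ 0 < β ∧
      μ (AW Y k n (k n : ℝ)) = ENNReal.ofReal α ∧
      μ (AW Y k n (-(k n : ℝ))) = ENNReal.ofReal β ∧
      (∃ m : ℕ, k n ≤ m + 1 ∧ α * (1 - p) ^ m = β * p ^ m) ∧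
      ((∀ i, i ≤ n → 0 < k i) →
        ∃ d : ℕ, α = (1/2) * p ^ (d + (k n - 1)) * (1 - p) ^ d ∧
          β = (1/2) * p ^ d * (1 - p) ^ (d + (k n - 1))) := by
  have hq0 : 0 < 1 - p := by linarith
  intro n
  induction n with
  | zero =>
    intro _
    refine ⟨1/2, 1/2, by norm_num, by norm_num, ?_, ?_, ⟨0, by omega, by norm_num⟩, ?_⟩
    · rw [(AW_zero_eq hk0).1, ← Measure.map_apply (hYmeas 0) (measurableSet_singleton _),
        hY0dist, stepDist_one]
    · rw [(AW_zero_eq hk0).2, ← Measure.map_apply (hYmeas 0) (measurableSet_singleton _),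
        hY0dist, stepDist_neg_one]
      norm_num
    · intro _
      refine ⟨0, ?_, ?_⟩ <;> simp [hk0]
  | succ n IH =>
    intro hkstep
    obtain ⟨α, β, hα, hβ, ha, hb, ⟨m, hm1, hm2⟩, hexact⟩ :=
      IH (fun i h1 h2 => hkstep i h1 (by omega))
    have hstep := hkstep (n + 1) (by omega) le_rfl
    simp only [Nat.add_sub_cancel] at hstep
    have h2 : k (n + 1) = k n + 1 ∨ k n = k (n + 1) + 1 := by
      rcases (abs_eq (by norm_num : (0:ℤ) ≤ 1)).mp hstep with h | h <;> omega
    have hAWa : AW Y k (n + 1) ((k (n+1) : ℝ)) = ANW Y k n ((k (n+1) : ℝ)) :=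
      AW_succ n (abs_of_nonneg (by positivity))
    have hAWb : AW Y k (n + 1) (-(k (n+1) : ℝ)) = ANW Y k n (-(k (n+1) : ℝ)) :=
      AW_succ n (by rw [abs_neg, abs_of_nonneg (by positivity)])
    by_cases hkn : k n = 0
    · -- last value zero; necessarily k (n+1) = 1
      have hkn1 : k (n + 1) = 1 := by omega
      have hcast : ((k n : ℝ)) = 0 := by exact_mod_cast hkn
      have ha0 : μ (AW Y k n 0) = ENNReal.ofReal α := by rw [← hcast]; exact ha
      have haa : μ (AW Y k (n+1) ((k (n+1) : ℝ))) = ENNReal.ofReal (α * p) := by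
        rw [hAWa, measure_ANW_zero hYmeas hYindep hYdist n hkn, ha0, hkn1]
        rw [Nat.cast_one, stepDist_one, ← ENNReal.ofReal_mul hα.le]
      have hbb : μ (AW Y k (n+1) (-(k (n+1) : ℝ))) = ENNReal.ofReal (α * (1 - p)) := by
        rw [hAWb, measure_ANW_zero hYmeas hYindep hYdist n hkn, ha0, hkn1]
        norm_num [stepDist_neg_one, ← ENNReal.ofReal_mul hα.le]
      refine ⟨α * p, α * (1 - p), by positivity, by positivity, haa, hbb,
        ⟨1, by omega, by ring⟩, ?_⟩
      intro hpos
      exact absurd (hpos n (by omega)) (by omega)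
    · have hknpos : 0 < k n := Nat.pos_of_ne_zero hkn
      have hcastpos : (0:ℝ) < (k n : ℝ) := by exact_mod_cast hknpos
      rcases h2 with hup | hdown
      · -- step up
        have e1 : ((k (n+1) : ℝ)) - (k n : ℝ) = 1 := by
          rw [hup]; push_cast; ring
        have e2 : ((k (n+1) : ℝ)) + (k n : ℝ) ≠ 1 ∧ ((k (n+1) : ℝ)) + (k n : ℝ) ≠ -1 := by
          constructor <;> · rw [hup]; push_cast; intro h; nlinarith [hcastpos]
        have e3 : -((k (n+1) : ℝ)) - (k n : ℝ) ≠ 1 ∧ -((k (n+1) : ℝ)) - (k n : ℝ) ≠ -1 := by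
          constructor <;> · rw [hup]; push_cast; intro h; nlinarith [hcastpos]
        have e4 : -((k (n+1) : ℝ)) + (k n : ℝ) = -1 := by rw [hup]; push_cast; ring
        have haa : μ (AW Y k (n+1) ((k (n+1) : ℝ))) = ENNReal.ofReal (α * p) := by
          rw [hAWa, measure_ANW_pos hYmeas hYindep hYdist n hknpos, ha, hb, e1,
            stepDist_one, stepDist_other p e2.1 e2.2, ← ENNReal.ofReal_mul hα.le]
          simp
        have hbb : μ (AW Y k (n+1) (-(k (n+1) : ℝ))) = ENNReal.ofReal (β * (1 - p)) := by
          rw [hAWb, measure_ANW_pos hYmeas hYindep hYdist n hknpos, ha, hb, e4,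
            stepDist_neg_one, stepDist_other p e3.1 e3.2, ← ENNReal.ofReal_mul hβ.le]
          simp
        refine ⟨α * p, β * (1 - p), by positivity, by positivity, haa, hbb,
          ⟨m + 1, by omega, ?_⟩, ?_⟩
        · have : α * (1 - p) ^ m * ((1 - p) * p) = β * p ^ m * ((1 - p) * p) := by rw [hm2]
          calc α * p * (1 - p) ^ (m + 1) = α * (1 - p) ^ m * ((1 - p) * p) := by ring
            _ = β * p ^ m * ((1 - p) * p) := this
            _ = β * (1 - p) * p ^ (m + 1) := by ring
        · intro hpos
          obtain ⟨d, hda, hdb⟩ := hexact (fun i hi => hpos i (by omega))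
          refine ⟨d, ?_, ?_⟩
          · rw [show d + (k (n+1) - 1) = (d + (k n - 1)) + 1 from by omega, pow_succ, hda]
            ring
          · rw [show d + (k (n+1) - 1) = (d + (k n - 1)) + 1 from by omega, pow_succ, hdb]
            ring
      · -- step down
        by_cases hk1 : k (n + 1) = 0
        · -- down to zero: k n = 1
          have hkn1 : k n = 1 := by omega
          have e1 : ((k (n+1) : ℝ)) - (k n : ℝ) = -1 := by
            rw [hk1, hkn1]; push_cast; ring
          have e2 : ((k (n+1) : ℝ)) + (k n : ℝ) = 1 := by rw [hk1, hkn1]; push_cast; ring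
          have key : μ (ANW Y k n ((k (n+1) : ℝ)))
              = ENNReal.ofReal (α * (1 - p) + β * p) := by
            rw [measure_ANW_pos hYmeas hYindep hYdist n hknpos, ha, hb, e1, e2,
              stepDist_one, stepDist_neg_one, ← ENNReal.ofReal_mul hα.le,
              ← ENNReal.ofReal_mul hβ.le, ← ENNReal.ofReal_add (by positivity) (by positivity)]
          have hneg : (-(k (n+1) : ℝ)) = ((k (n+1) : ℝ)) := by rw [hk1]; norm_num
          refine ⟨α * (1 - p) + β * p, α * (1 - p) + β * p, by positivity, by positivity,
            by rw [hAWa]; exact key, by rw [hAWb, hneg]; exact key,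
            ⟨0, by omega, by ring⟩, ?_⟩
          intro hpos
          exact absurd (hpos (n+1) le_rfl) (by omega)
        · -- down to positive
          have hk1pos : 0 < k (n + 1) := Nat.pos_of_ne_zero hk1
          have e1 : ((k (n+1) : ℝ)) - (k n : ℝ) = -1 := by
            rw [hdown]; push_cast; ring
          have hc1 : (1:ℝ) ≤ (k (n+1) : ℝ) := by exact_mod_cast hk1pos
          have e2 : ((k (n+1) : ℝ)) + (k n : ℝ) ≠ 1 ∧ ((k (n+1) : ℝ)) + (k n : ℝ) ≠ -1 := by
            constructor <;> · rw [hdown]; push_cast; intro h; nlinarith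
          have e3 : -((k (n+1) : ℝ)) - (k n : ℝ) ≠ 1 ∧ -((k (n+1) : ℝ)) - (k n : ℝ) ≠ -1 := by
            constructor <;> · rw [hdown]; push_cast; intro h; nlinarith
          have e4 : -((k (n+1) : ℝ)) + (k n : ℝ) = 1 := by rw [hdown]; push_cast; ring
          have haa : μ (AW Y k (n+1) ((k (n+1) : ℝ))) = ENNReal.ofReal (α * (1 - p)) := by
            rw [hAWa, measure_ANW_pos hYmeas hYindep hYdist n hknpos, ha, hb, e1,
              stepDist_neg_one, stepDist_other p e2.1 e2.2, ← ENNReal.ofReal_mul hα.le]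
            simp
          have hbb : μ (AW Y k (n+1) (-(k (n+1) : ℝ))) = ENNReal.ofReal (β * p) := by
            rw [hAWb, measure_ANW_pos hYmeas hYindep hYdist n hknpos, ha, hb, e4,
              stepDist_one, stepDist_other p e3.1 e3.2, ← ENNReal.ofReal_mul hβ.le]
            simp
          have hm0 : 1 ≤ m := by omega
          refine ⟨α * (1 - p), β * p, by positivity, by positivity, haa, hbb,
            ⟨m - 1, by omega, ?_⟩, ?_⟩
          · have hmeq : m = (m - 1) + 1 := by omega
            rw [hmeq, pow_succ, pow_succ] at hm2
            calc α * (1 - p) * (1 - p) ^ (m - 1) = α * ((1 - p) ^ (m-1) * (1 - p)) := by ring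
              _ = β * (p ^ (m-1) * p) := hm2
              _ = β * p * p ^ (m - 1) := by ring
          · intro hpos
            obtain ⟨d, hda, hdb⟩ := hexact (fun i hi => hpos i (by omega))
            refine ⟨d + 1, ?_, ?_⟩
            · rw [show (d + 1) + (k (n+1) - 1) = d + (k n - 1) from by omega, hda, pow_succ]
              ring
            · rw [show (d + 1) + (k (n+1) - 1) = d + (k n - 1) from by omega, hdb, pow_succ]
              ring


lemma measurableSet_ANW (hYmeas : ∀ i, Measurable (Y i)) (n : ℕ) (r : ℝ) :
    MeasurableSet (ANW Y k n r) :=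
  (measurableSet_Aset hYmeas k n).inter
    ((Finset.measurable_sum _ fun j _ => hYmeas j) (measurableSet_singleton r))

lemma disjoint_ANW {n : ℕ} {r r' : ℝ} (h : r ≠ r') : Disjoint (ANW Y k n r) (ANW Y k n r') := by
  rw [Set.disjoint_left]
  rintro ω ⟨_, h1⟩ ⟨_, h2⟩
  exact h (h1 ▸ h2 ▸ rfl)

lemma inter_B_eq (n : ℕ) :
    Aset Y k n ∩ {ω | |∑ j ∈ Finset.range (n + 2), Y j ω| = (k n : ℝ) + 1}
      = ANW Y k n ((k n : ℝ) + 1) ∪ ANW Y k n (-((k n : ℝ) + 1)) := by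
  ext ω
  simp only [ANW, Set.mem_inter_iff, Set.mem_union, Set.mem_setOf_eq]
  constructor
  · rintro ⟨hA, hB⟩
    rcases (abs_eq (by positivity : (0:ℝ) ≤ (k n : ℝ) + 1)).mp hB with h | h
    · exact Or.inl ⟨hA, h⟩
    · exact Or.inr ⟨hA, h⟩
  · rintro (⟨hA, h⟩ | ⟨hA, h⟩)
    · exact ⟨hA, by rw [h, abs_of_nonneg (by positivity)]⟩
    · exact ⟨hA, by rw [h, abs_neg, abs_of_nonneg (by positivity)]⟩

end BWalk


open BWalk in
theorem initial_state_walk_conditional_transition_probability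
    {Ω : Type*} [MeasurableSpace Ω] (μ : Measure Ω) [IsProbabilityMeasure μ]
    (p : ℝ) (hp0 : 0 < p) (hp1 : p < 1)
    (Y : ℕ → Ω → ℝ)
    (hYmeas : ∀ i, Measurable (Y i))
    (hYindep : iIndepFun Y μ)
    (hY0dist : Measure.map (Y 0) μ = stepDist (1/2))
    (hYdist : ∀ i, Measure.map (Y (i + 1)) μ = stepDist p)
    (n : ℕ) (k : ℕ → ℕ) (hk0 : k 0 = 1)
    (hkstep : ∀ i, 1 ≤ i → i ≤ n → |(k i : ℤ) - (k (i - 1) : ℤ)| = 1) :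
    ((∀ i, i ≤ n → 0 < k i) →
      ProbabilityTheory.cond μ
          {ω | ∀ i, i ≤ n → |∑ j ∈ Finset.range (i + 1), Y j ω| = (k i : ℝ)}
          {ω | |∑ j ∈ Finset.range (n + 2), Y j ω| = (k n : ℝ) + 1}
        = ENNReal.ofReal
            ((p ^ (k n) + (1 - p) ^ (k n)) / (p ^ (k n - 1) + (1 - p) ^ (k n - 1)))) ∧
    (k n = 0 →
      ProbabilityTheory.cond μ
          {ω | ∀ i, i ≤ n → |∑ j ∈ Finset.range (i + 1), Y j ω| = (k i : ℝ)}
          {ω | |∑ j ∈ Finset.range (n + 2), Y j ω| = (k n : ℝ) + 1} = 1) ∧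
    (0 < k n →
      ENNReal.ofReal (1/2) ≤
        ProbabilityTheory.cond μ
          {ω | ∀ i, i ≤ n → |∑ j ∈ Finset.range (i + 1), Y j ω| = (k i : ℝ)}
          {ω | |∑ j ∈ Finset.range (n + 2), Y j ω| = (k n : ℝ) + 1}) := by
  have hq0 : 0 < 1 - p := by linarith
  obtain ⟨α, β, hα, hβ, ha, hb, ⟨m, hm1, hm2⟩, hexact⟩ :=
    main_induction (μ := μ) (Y := Y) (k := k) hp0 hp1 hYmeas hYindep hY0dist hYdist hk0 n hkstep
  set B : Set Ω := {ω | |∑ j ∈ Finset.range (n + 2), Y j ω| = (k n : ℝ) + 1} with hB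
  have hAdef : {ω : Ω | ∀ i, i ≤ n → |∑ j ∈ Finset.range (i + 1), Y j ω| = (k i : ℝ)}
      = Aset Y k n := rfl
  rw [hAdef]
  have hcond : ProbabilityTheory.cond μ (Aset Y k n) B
      = (μ (Aset Y k n))⁻¹ * μ (Aset Y k n ∩ B) :=
    ProbabilityTheory.cond_apply (measurableSet_Aset hYmeas k n) μ B
  have hABsplit : μ (Aset Y k n ∩ B) = μ (ANW Y k n ((k n : ℝ) + 1))
      + μ (ANW Y k n (-((k n : ℝ) + 1))) := by
    rw [inter_B_eq n, measure_union (disjoint_ANW (by intro h; nlinarith [Nat.cast_nonneg (α := ℝ) (k n)]))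
      (measurableSet_ANW hYmeas n _)]
  -- now two global cases on k n
  by_cases hkn : k n = 0
  · -- conditional probability is 1
    have hcast : ((k n : ℝ)) = 0 := by exact_mod_cast hkn
    have hμA : μ (Aset Y k n) = ENNReal.ofReal α := by
      rw [Aset_eq_union (Y := Y) k n, hcast, neg_zero, Set.union_self, ← hcast]
      exact ha
    have hμAB : μ (Aset Y k n ∩ B) = ENNReal.ofReal α := by
      rw [hABsplit, measure_ANW_zero hYmeas hYindep hYdist n hkn,
        measure_ANW_zero hYmeas hYindep hYdist n hkn, hcast]
      norm_num [stepDist_one, stepDist_neg_one]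
      rw [← hcast, ha, ← ENNReal.ofReal_mul hα.le, ← ENNReal.ofReal_mul hα.le,
        ← ENNReal.ofReal_add (by positivity) (by positivity)]
      congr 1
      ring
    have hone : ProbabilityTheory.cond μ (Aset Y k n) B = 1 := by
      rw [hcond, hμA, hμAB]
      exact ENNReal.inv_mul_cancel (by simp [hα]) ENNReal.ofReal_ne_top
    refine ⟨fun hpos => absurd (hpos n le_rfl) (by omega), fun _ => hone, fun h => absurd h (by omega)⟩
  · -- positive case
    have hknpos : 0 < k n := Nat.pos_of_ne_zero hkn
    have hcastpos : (0:ℝ) < (k n : ℝ) := by exact_mod_cast hknpos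
    have hμA : μ (Aset Y k n) = ENNReal.ofReal (α + β) := by
      rw [Aset_eq_union (Y := Y) k n, measure_union (disjoint_AW (by intro h; nlinarith))
        (measurableSet_AW hYmeas k n _), ha, hb, ← ENNReal.ofReal_add hα.le hβ.le]
    have hμAB : μ (Aset Y k n ∩ B) = ENNReal.ofReal (α * p + β * (1 - p)) := by
      rw [hABsplit, measure_ANW_pos hYmeas hYindep hYdist n hknpos,
        measure_ANW_pos hYmeas hYindep hYdist n hknpos, ha, hb]
      have e1 : ((k n : ℝ) + 1) - (k n : ℝ) = 1 := by ring
      have e2 : ((k n : ℝ) + 1) + (k n : ℝ) ≠ 1 ∧ ((k n : ℝ) + 1) + (k n : ℝ) ≠ -1 := by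
        constructor <;> · intro h; nlinarith
      have e3 : -((k n : ℝ) + 1) - (k n : ℝ) ≠ 1 ∧ -((k n : ℝ) + 1) - (k n : ℝ) ≠ -1 := by
        constructor <;> · intro h; nlinarith
      have e4 : -((k n : ℝ) + 1) + (k n : ℝ) = -1 := by ring
      rw [e1, e4, stepDist_one, stepDist_neg_one, stepDist_other p e2.1 e2.2,
        stepDist_other p e3.1 e3.2, ← ENNReal.ofReal_mul hα.le, ← ENNReal.ofReal_mul hβ.le]
      simp only [mul_zero, add_zero, zero_add]
      rw [← ENNReal.ofReal_add (by positivity) (by positivity)]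
    have hcondval : ProbabilityTheory.cond μ (Aset Y k n) B
        = ENNReal.ofReal ((α * p + β * (1 - p)) / (α + β)) := by
      rw [hcond, hμA, hμAB, ENNReal.ofReal_div_of_pos (by positivity),
        ENNReal.div_eq_inv_mul]
    refine ⟨?_, fun h => absurd h hkn, ?_⟩
    · -- exact formula
      intro hpos
      obtain ⟨d, hda, hdb⟩ := hexact hpos
      rw [hcondval]
      congr 1
      have hkeq : k n = (k n - 1) + 1 := by omega
      set e := k n - 1 with he
      rw [hda, hdb, show k n = e + 1 from hkeq]
      rw [div_eq_div_iff (by positivity) (by positivity)]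
      simp only [pow_add, pow_succ]
      ring
    · -- lower bound 1/2
      intro _
      rw [hcondval]
      apply ENNReal.ofReal_le_ofReal
      rw [le_div_iff₀ (by positivity)]
      rcases le_total p (1/2) with hhalf | hhalf
      · -- p ≤ 1/2 : α ≤ β
        have hpq : p ≤ 1 - p := by linarith
        have hpow : p ^ m ≤ (1 - p) ^ m := pow_le_pow_left₀ hp0.le hpq m
        have hαβ : α ≤ β := by
          have h1 : α * (1 - p) ^ m ≤ β * (1 - p) ^ m := by
            rw [hm2]
            exact mul_le_mul_of_nonneg_left hpow hβ.le
          exact le_of_mul_le_mul_right h1 (by positivity)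
        nlinarith [mul_nonneg (sub_nonneg.mpr hhalf) (sub_nonneg.mpr hαβ)]
      · -- 1/2 ≤ p : β ≤ α
        have hpq : 1 - p ≤ p := by linarith
        have hpow : (1 - p) ^ m ≤ p ^ m := pow_le_pow_left₀ hq0.le hpq m
        have hβα : β ≤ α := by
          have h1 : β * p ^ m ≤ α * p ^ m := by
            rw [← hm2]
            exact mul_le_mul_of_nonneg_left hpow hα.le
          exact le_of_mul_le_mul_right h1 (by positivity)
        nlinarith [mul_nonneg (sub_nonneg.mpr hhalf) (sub_nonneg.mpr hβα)]
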